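/- Let a < b be real numbers, σ₁, σ₂ > 0, and u ∈ C¹([a,b], ℂ). Define d(t) = min(t − a, b − t) and σ(t) = σ₁ if t − a ≤ b − t, σ(t) = σ₂ otherwise. Then ∫ₐᵇ |u'(t)|² dt + σ₁|u(a)|² + σ₂|u(b)|² ≥ (1/4)∫ₐᵇ (d(t) + 1/(2σ(t)))⁻² |u(t)|² dt. -/

import Mathlib

open Set MeasureTheory intervalIntegral

lemma robin_hardy_key (a b : ℝ) (hab : a ≤ b) (u u' : ℝ → ℂ) (w w' : ℝ → ℝ)
    (hu : ∀ t ∈ Set.Ioo a b, HasDerivAt u (u' t) t)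
    (huc : ContinuousOn u (Set.Icc a b))
    (hu'c : ContinuousOn u' (Set.Icc a b))
    (hw : ∀ t ∈ Set.Ioo a b, HasDerivAt w (w' t) t)
    (hwc : ContinuousOn w (Set.Icc a b))
    (hw'c : ContinuousOn w' (Set.Icc a b)) :
    w b * ‖u b‖ ^ 2 - w a * ‖u a‖ ^ 2 ≤
      ∫ t in a..b, (‖u' t‖ ^ 2 + (w' t + (w t) ^ 2) * ‖u t‖ ^ 2) := by
  have normsq : ∀ z : ℂ, ‖z‖ ^ 2 = z.re ^ 2 + z.im ^ 2 := fun z => by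
    rw [Complex.sq_norm, Complex.normSq_apply]; ring
  set F : ℝ → ℝ := fun t => w t * ((u t).re ^ 2 + (u t).im ^ 2) with hF
  set G : ℝ → ℝ := fun t =>
    w' t * ((u t).re ^ 2 + (u t).im ^ 2) +
      w t * (2 * (u t).re * (u' t).re + 2 * (u t).im * (u' t).im) with hG
  -- continuity helpers
  have hre : ContinuousOn (fun t => (u t).re) (Set.Icc a b) :=
    Complex.continuous_re.comp_continuousOn huc
  have him : ContinuousOn (fun t => (u t).im) (Set.Icc a b) :=
    Complex.continuous_im.comp_continuousOn huc
  have hre' : ContinuousOn (fun t => (u' t).re) (Set.Icc a b) :=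
    Complex.continuous_re.comp_continuousOn hu'c
  have him' : ContinuousOn (fun t => (u' t).im) (Set.Icc a b) :=
    Complex.continuous_im.comp_continuousOn hu'c
  have hFc : ContinuousOn F (Set.Icc a b) := hwc.mul ((hre.pow 2).add (him.pow 2))
  have hGc : ContinuousOn G (Set.Icc a b) :=
    (hw'c.mul ((hre.pow 2).add (him.pow 2))).add
      (hwc.mul ((((continuousOn_const.mul hre).mul hre').add
        ((continuousOn_const.mul him).mul him'))))
  have hFd : ∀ t ∈ Set.Ioo a b, HasDerivAt F (G t) t := by
    intro t ht
    have hut := hu t ht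
    have hret : HasDerivAt (fun s => (u s).re) ((u' t).re) t :=
      (Complex.reCLM.hasFDerivAt.comp_hasDerivAt t hut)
    have himt : HasDerivAt (fun s => (u s).im) ((u' t).im) t :=
      (Complex.imCLM.hasFDerivAt.comp_hasDerivAt t hut)
    have hN : HasDerivAt (fun s => (u s).re ^ 2 + (u s).im ^ 2)
        (2 * (u t).re * (u' t).re + 2 * (u t).im * (u' t).im) t := by
      have := (hret.pow 2).add (himt.pow 2)
      refine this.congr_deriv ?_
      push_cast; ring
    have := (hw t ht).mul hN
    exact this
  have hGint : IntervalIntegrable G volume a b := by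
    rw [← Set.uIcc_of_le hab] at hGc
    exact hGc.intervalIntegrable
  have hFTC : ∫ t in a..b, G t = F b - F a :=
    intervalIntegral.integral_eq_sub_of_hasDeriv_right_of_le hab hFc
      (fun t ht => (hFd t ht).hasDerivWithinAt) hGint
  have hRHSc : ContinuousOn (fun t => ‖u' t‖ ^ 2 + (w' t + (w t) ^ 2) * ‖u t‖ ^ 2)
      (Set.Icc a b) := by
    have h1 : ContinuousOn (fun t => ‖u' t‖ ^ 2) (Set.Icc a b) := (hu'c.norm).pow 2
    have h2 : ContinuousOn (fun t => ‖u t‖ ^ 2) (Set.Icc a b) := (huc.norm).pow 2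
    exact h1.add ((hw'c.add (hwc.pow 2)).mul h2)
  have hRHSint : IntervalIntegrable
      (fun t => ‖u' t‖ ^ 2 + (w' t + (w t) ^ 2) * ‖u t‖ ^ 2) volume a b := by
    rw [← Set.uIcc_of_le hab] at hRHSc
    exact hRHSc.intervalIntegrable
  have hpt : ∀ t ∈ Set.Icc a b, G t ≤ ‖u' t‖ ^ 2 + (w' t + (w t) ^ 2) * ‖u t‖ ^ 2 := by
    intro t _
    simp only [hG, normsq]
    nlinarith [sq_nonneg ((u' t).re - w t * (u t).re), sq_nonneg ((u' t).im - w t * (u t).im)]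
  have hmono := intervalIntegral.integral_mono_on hab hGint hRHSint hpt
  rw [hFTC] at hmono
  have hFb : F b = w b * ‖u b‖ ^ 2 := by simp only [hF, normsq]
  have hFa : F a = w a * ‖u a‖ ^ 2 := by simp only [hF, normsq]
  rw [hFb, hFa] at hmono
  exact hmono

theorem interval_robin_hardy (a b σ₁ σ₂ : ℝ) (hab : a < b) (hσ₁ : 0 < σ₁) (hσ₂ : 0 < σ₂)
    (u : ℝ → ℂ) (hu : ContDiffOn ℝ 1 u (Set.Icc a b)) :
    (∫ t in a..b, ‖deriv u t‖ ^ 2) + σ₁ * ‖u a‖ ^ 2 + σ₂ * ‖u b‖ ^ 2 ≥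
      (1 / 4) * ∫ t in a..b,
        ((min (t - a) (b - t) + 1 / (2 * (if t - a ≤ b - t then σ₁ else σ₂))) ^ 2)⁻¹
          * ‖u t‖ ^ 2 := by
  set m : ℝ := (a + b) / 2 with hm
  have ham : a ≤ m := by simp only [hm]; linarith
  have hmb : m ≤ b := by simp only [hm]; linarith
  have hc₁ : (0:ℝ) < 1 / (2 * σ₁) := by positivity
  have hc₂ : (0:ℝ) < 1 / (2 * σ₂) := by positivity
  set u' : ℝ → ℂ := fun t => derivWithin u (Set.Icc a b) t with hu'def
  have huc : ContinuousOn u (Set.Icc a b) := hu.continuousOn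
  have hu'c : ContinuousOn u' (Set.Icc a b) :=
    hu.continuousOn_derivWithin (uniqueDiffOn_Icc hab) le_rfl
  have hud : ∀ t ∈ Set.Ioo a b, HasDerivAt u (u' t) t := by
    intro t ht
    have hnb : Set.Icc a b ∈ nhds t := Icc_mem_nhds ht.1 ht.2
    have hda : DifferentiableAt ℝ u t :=
      ((hu.differentiableOn one_ne_zero) t (Set.Ioo_subset_Icc_self ht)).differentiableAt hnb
    have heq : u' t = deriv u t := derivWithin_of_mem_nhds hnb
    rw [heq]; exact hda.hasDerivAt
  have hderiv_eq : ∀ t ∈ Set.Ioo a b, ‖deriv u t‖ ^ 2 = ‖u' t‖ ^ 2 := by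
    intro t ht
    have hnb : Set.Icc a b ∈ nhds t := Icc_mem_nhds ht.1 ht.2
    simp only [hu'def]
    rw [derivWithin_of_mem_nhds hnb]
  -- integrands
  set Du : ℝ → ℝ := fun t => ‖u' t‖ ^ 2 with hDu
  set R : ℝ → ℝ := fun t =>
    ((min (t - a) (b - t) + 1 / (2 * (if t - a ≤ b - t then σ₁ else σ₂))) ^ 2)⁻¹
      * ‖u t‖ ^ 2 with hR
  set Rl : ℝ → ℝ := fun t => (((t - a) + 1 / (2 * σ₁)) ^ 2)⁻¹ * ‖u t‖ ^ 2 with hRl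
  set Rr : ℝ → ℝ := fun t => (((b - t) + 1 / (2 * σ₂)) ^ 2)⁻¹ * ‖u t‖ ^ 2 with hRr
  have hDuc : ContinuousOn Du (Set.Icc a b) := (hu'c.norm).pow 2
  have hposl : ∀ t ∈ Set.Icc a b, (0:ℝ) < (t - a) + 1 / (2 * σ₁) := fun t ht => by
    have := ht.1; linarith
  have hposr : ∀ t ∈ Set.Icc a b, (0:ℝ) < (b - t) + 1 / (2 * σ₂) := fun t ht => by
    have := ht.2; linarith
  have hRlc : ContinuousOn Rl (Set.Icc a b) := by
    refine ContinuousOn.mul (ContinuousOn.inv₀ (by fun_prop) ?_) ((huc.norm).pow 2)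
    intro t ht
    exact pow_ne_zero 2 (ne_of_gt (hposl t ht))
  have hRrc : ContinuousOn Rr (Set.Icc a b) := by
    refine ContinuousOn.mul (ContinuousOn.inv₀ (by fun_prop) ?_) ((huc.norm).pow 2)
    intro t ht
    exact pow_ne_zero 2 (ne_of_gt (hposr t ht))
  -- pointwise identities for R
  have hReql : Set.EqOn R Rl (Set.Icc a m) := by
    intro t ht
    have h1 : t - a ≤ b - t := by
      have := ht.2; simp only [hm] at this; linarith
    simp only [hR, hRl, if_pos h1, min_eq_left h1]
  have hReqr : Set.EqOn R Rr (Set.Ioc m b) := by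
    intro t ht
    have h1 : ¬ (t - a ≤ b - t) := by
      have := ht.1; simp only [hm] at this; push_neg; linarith
    simp only [hR, hRr, if_neg h1, min_eq_right (le_of_lt (lt_of_not_ge h1))]
  -- integrability
  have subl : Set.Icc a m ⊆ Set.Icc a b := Set.Icc_subset_Icc le_rfl hmb
  have subr : Set.Icc m b ⊆ Set.Icc a b := Set.Icc_subset_Icc ham le_rfl
  have hDuInt1 : IntervalIntegrable Du volume a m := by
    apply ContinuousOn.intervalIntegrable
    rw [Set.uIcc_of_le ham]
    exact hDuc.mono subl
  have hDuInt2 : IntervalIntegrable Du volume m b := by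
    apply ContinuousOn.intervalIntegrable
    rw [Set.uIcc_of_le hmb]
    exact hDuc.mono subr
  have hRlInt : IntervalIntegrable Rl volume a m := by
    apply ContinuousOn.intervalIntegrable
    rw [Set.uIcc_of_le ham]
    exact hRlc.mono subl
  have hRrInt : IntervalIntegrable Rr volume m b := by
    apply ContinuousOn.intervalIntegrable
    rw [Set.uIcc_of_le hmb]
    exact hRrc.mono subr
  have hRInt1 : IntervalIntegrable R volume a m := by
    rw [intervalIntegrable_iff_integrableOn_Ioc_of_le ham] at hRlInt ⊢
    exact hRlInt.congr_fun (fun t ht => (hReql (Set.Ioc_subset_Icc_self ht)).symm)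
      measurableSet_Ioc
  have hRInt2 : IntervalIntegrable R volume m b := by
    rw [intervalIntegrable_iff_integrableOn_Ioc_of_le hmb] at hRrInt ⊢
    exact hRrInt.congr_fun (fun t ht => (hReqr ht).symm) measurableSet_Ioc
  -- rewrite LHS integral
  have hb0 : ∀ᵐ x : ℝ, x ≠ b := by
    rw [MeasureTheory.ae_iff]
    have : {x : ℝ | ¬ x ≠ b} = {b} := by ext x; simp
    rw [this]; exact measure_singleton b
  have hLHSeq : (∫ t in a..b, ‖deriv u t‖ ^ 2) = ∫ t in a..b, Du t := by
    apply intervalIntegral.integral_congr_ae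
    filter_upwards [hb0] with x hx hxm
    rw [Set.uIoc_of_le (le_of_lt hab)] at hxm
    exact hderiv_eq x ⟨hxm.1, lt_of_le_of_ne hxm.2 hx⟩
  -- split integrals
  have hDusplit : (∫ t in a..b, Du t) = (∫ t in a..m, Du t) + ∫ t in m..b, Du t :=
    (intervalIntegral.integral_add_adjacent_intervals hDuInt1 hDuInt2).symm
  have hRsplit : (∫ t in a..b, R t) = (∫ t in a..m, R t) + ∫ t in m..b, R t :=
    (intervalIntegral.integral_add_adjacent_intervals hRInt1 hRInt2).symm
  have hRint1eq : (∫ t in a..m, R t) = ∫ t in a..m, Rl t := by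
    apply intervalIntegral.integral_congr
    rwa [Set.uIcc_of_le ham]
  have hRint2eq : (∫ t in m..b, R t) = ∫ t in m..b, Rr t := by
    apply intervalIntegral.integral_congr_ae
    refine Filter.Eventually.of_forall fun t ht => ?_
    rw [Set.uIoc_of_le hmb] at ht
    exact hReqr ht
  -- left half inequality
  have hleft : (∫ t in a..m, Du t) - (1/4) * (∫ t in a..m, Rl t) ≥ - (σ₁ * ‖u a‖ ^ 2) := by
    set w : ℝ → ℝ := fun t => (1/2) * ((t - a) + 1 / (2 * σ₁))⁻¹ with hw
    set w' : ℝ → ℝ := fun t => -(1/2) * ((((t - a) + 1 / (2 * σ₁)) ^ 2)⁻¹) with hw'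
    have hwd : ∀ t ∈ Set.Ioo a m, HasDerivAt w (w' t) t := by
      intro t ht
      have hpos := hposl t (subl (Set.Ioo_subset_Icc_self ht))
      have h1 : HasDerivAt (fun s => (s - a) + 1 / (2 * σ₁)) 1 t := by
        simpa using ((hasDerivAt_id t).sub_const a).add_const (1 / (2 * σ₁))
      have h2 := (h1.inv (ne_of_gt hpos)).const_mul (1/2 : ℝ)
      refine h2.congr_deriv ?_
      simp only [hw']; ring
    have hwc : ContinuousOn w (Set.Icc a m) := by
      refine ContinuousOn.mul continuousOn_const (ContinuousOn.inv₀ (by fun_prop) ?_)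
      exact fun t ht => ne_of_gt (hposl t (subl ht))
    have hw'c : ContinuousOn w' (Set.Icc a m) := by
      refine ContinuousOn.mul continuousOn_const (ContinuousOn.inv₀ (by fun_prop) ?_)
      exact fun t ht => pow_ne_zero 2 (ne_of_gt (hposl t (subl ht)))
    have hkey := robin_hardy_key a m ham u u' w w'
      (fun t ht => hud t (Set.Ioo_subset_Ioo le_rfl hmb ht))
      (huc.mono subl) (hu'c.mono subl) hwd hwc hw'c
    have hinteq : (∫ t in a..m, (‖u' t‖ ^ 2 + (w' t + (w t) ^ 2) * ‖u t‖ ^ 2)) =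
        (∫ t in a..m, Du t) - (1/4) * (∫ t in a..m, Rl t) := by
      rw [← intervalIntegral.integral_const_mul, ← intervalIntegral.integral_sub hDuInt1
        (hRlInt.const_mul (1/4))]
      apply intervalIntegral.integral_congr
      intro t ht
      rw [Set.uIcc_of_le ham] at ht
      simp only [hDu, hRl, hw, hw', ← inv_pow]
      ring
    rw [hinteq] at hkey
    have hwa : w a = σ₁ := by
      simp only [hw]; rw [sub_self]; field_simp; ring
    have hwm : 0 ≤ w m := by
      have := hposl m (subl (Set.right_mem_Icc.mpr ham))
      simp only [hw]; positivity
    have h1 : 0 ≤ w m * ‖u m‖ ^ 2 := mul_nonneg hwm (by positivity)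
    rw [hwa] at hkey
    linarith
  -- right half inequality
  have hright : (∫ t in m..b, Du t) - (1/4) * (∫ t in m..b, Rr t) ≥ - (σ₂ * ‖u b‖ ^ 2) := by
    set w : ℝ → ℝ := fun t => -(1/2) * ((b - t) + 1 / (2 * σ₂))⁻¹ with hw
    set w' : ℝ → ℝ := fun t => -(1/2) * ((((b - t) + 1 / (2 * σ₂)) ^ 2)⁻¹) with hw'
    have hwd : ∀ t ∈ Set.Ioo m b, HasDerivAt w (w' t) t := by
      intro t ht
      have hpos := hposr t (subr (Set.Ioo_subset_Icc_self ht))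
      have h1 : HasDerivAt (fun s => (b - s) + 1 / (2 * σ₂)) (-1) t := by
        simpa using ((hasDerivAt_id t).const_sub b).add_const (1 / (2 * σ₂))
      have h2 := (h1.inv (ne_of_gt hpos)).const_mul (-(1/2) : ℝ)
      refine h2.congr_deriv ?_
      simp only [hw']; ring
    have hwc : ContinuousOn w (Set.Icc m b) := by
      refine ContinuousOn.mul continuousOn_const (ContinuousOn.inv₀ (by fun_prop) ?_)
      exact fun t ht => ne_of_gt (hposr t (subr ht))
    have hw'c : ContinuousOn w' (Set.Icc m b) := by
      refine ContinuousOn.mul continuousOn_const (ContinuousOn.inv₀ (by fun_prop) ?_)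
      exact fun t ht => pow_ne_zero 2 (ne_of_gt (hposr t (subr ht)))
    have hkey := robin_hardy_key m b hmb u u' w w'
      (fun t ht => hud t (Set.Ioo_subset_Ioo ham le_rfl ht))
      (huc.mono subr) (hu'c.mono subr) hwd hwc hw'c
    have hinteq : (∫ t in m..b, (‖u' t‖ ^ 2 + (w' t + (w t) ^ 2) * ‖u t‖ ^ 2)) =
        (∫ t in m..b, Du t) - (1/4) * (∫ t in m..b, Rr t) := by
      rw [← intervalIntegral.integral_const_mul, ← intervalIntegral.integral_sub hDuInt2
        (hRrInt.const_mul (1/4))]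
      apply intervalIntegral.integral_congr
      intro t ht
      rw [Set.uIcc_of_le hmb] at ht
      simp only [hDu, hRr, hw, hw', ← inv_pow]
      ring
    rw [hinteq] at hkey
    have hwb : w b = -σ₂ := by
      simp only [hw]; rw [sub_self]; field_simp; ring
    have hwm : w m ≤ 0 := by
      have := hposr m (subr (Set.left_mem_Icc.mpr hmb))
      simp only [hw]
      have : (0:ℝ) ≤ ((b - m) + 1 / (2 * σ₂))⁻¹ := le_of_lt (by positivity)
      nlinarith
    have h1 : 0 ≤ - (w m * ‖u m‖ ^ 2) := by
      have : (0:ℝ) ≤ ‖u m‖ ^ 2 := by positivity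
      nlinarith
    rw [hwb] at hkey
    linarith
  rw [hLHSeq, hDusplit, hRsplit, hRint1eq, hRint2eq]
  rw [ge_iff_le, mul_add]
  linarith
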